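/- Let M be a unitary operator on H that is causal relative to a neighborhood 𝒩. Then for every bounded operator T on H, T is local upon some finite subset of ℤ^n if and only if M† T M is local upon some finite subset of ℤ^n (that is, the algebra of local operators is invariant under conjugation by M). -/

import Mathlib

open scoped ENNReal

noncomputable section

namespace QCA

abbrev Lat (n : ℕ) : Type := Fin n → ℤ

def Conf (n : ℕ) (A : Type*) (q0 : A) : Type _ :=
  {c : Lat n → A // {x : Lat n | c x ≠ q0}.Finite}

def c0 (n : ℕ) (A : Type*) (q0 : A) : Conf n A q0 :=
  ⟨fun _ => q0, by simp⟩

abbrev H (n : ℕ) (A : Type*) (q0 : A) : Type _ := lp (fun _ : Conf n A q0 => ℂ) 2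

def eVec {n : ℕ} {A : Type*} {q0 : A} (c : Conf n A q0) : H n A q0 :=
  letI : DecidableEq (Conf n A q0) := Classical.decEq _
  lp.single 2 c 1

/-- Translation of a configuration by `z`: the configuration `x ↦ c (x + z)`. -/
def shiftConf {n : ℕ} {A : Type*} {q0 : A} (z : Lat n) (c : Conf n A q0) : Conf n A q0 :=
  ⟨fun x => c.1 (x + z), by
    have h : {x : Lat n | c.1 (x + z) ≠ q0} ⊆ (fun x : Lat n => x + z) ⁻¹' {x | c.1 x ≠ q0} :=
      fun x hx => hx
    exact (c.2.preimage ((add_left_injective z).injOn)).subset h⟩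

/-- Translation by `z` as a permutation of the set of finite configurations. -/
def shiftEquiv {n : ℕ} {A : Type*} (q0 : A) (z : Lat n) : Conf n A q0 ≃ Conf n A q0 where
  toFun := shiftConf z
  invFun := shiftConf (-z)
  left_inv c := Subtype.ext (funext fun x => by
    show c.1 (x + -z + z) = c.1 x
    rw [neg_add_cancel_right])
  right_inv c := Subtype.ext (funext fun x => by
    show c.1 (x + z + -z) = c.1 x
    rw [add_neg_cancel_right])

theorem memℓp_comp_equiv {ι κ : Type*} (e : κ ≃ ι) {f : ι → ℂ} (hf : Memℓp f 2) :
    Memℓp (fun k => f (e k)) 2 := by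
  have hp : 0 < (2 : ℝ≥0∞).toReal := by norm_num
  exact memℓp_gen ((e.summable_iff
    (f := fun i => ‖f i‖ ^ (2 : ℝ≥0∞).toReal)).mpr (hf.summable hp))

/-- The unitary operator on `ℓ²` induced by a permutation of the index set. -/
def lpCongr {ι κ : Type*} (e : ι ≃ κ) :
    lp (fun _ : ι => ℂ) 2 ≃ₗᵢ[ℂ] lp (fun _ : κ => ℂ) 2 where
  toLinearEquiv :=
    { toFun := fun f => ⟨fun k => f (e.symm k), memℓp_comp_equiv e.symm (lp.memℓp f)⟩
      map_add' := fun f g => lp.ext (funext fun k => by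
        simp [lp.coeFn_add] <;> rfl)
      map_smul' := fun r f => lp.ext (funext fun k => by
        simp [lp.coeFn_smul])
      invFun := fun g => ⟨fun i => g (e i), memℓp_comp_equiv e (lp.memℓp g)⟩
      left_inv := fun f => lp.ext (funext fun i => by simp)
      right_inv := fun g => lp.ext (funext fun k => by simp) }
  norm_map' := fun f => by
    have hp : 0 < (2 : ℝ≥0∞).toReal := by norm_num
    rw [lp.norm_eq_tsum_rpow hp, lp.norm_eq_tsum_rpow hp]
    congr 1
    exact e.symm.tsum_eq (fun i => ‖f i‖ ^ (2 : ℝ≥0∞).toReal)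

/-- The translation operator `τ_z` on the Hilbert space of finite configurations. -/
def tau {n : ℕ} {A : Type*} (q0 : A) (z : Lat n) : H n A q0 ≃ₗᵢ[ℂ] H n A q0 :=
  lpCongr (shiftEquiv q0 z)

/-- A bounded operator on `H` is translation invariant if `τ_z ∘ M ∘ τ_z⁻¹ = M` for all `z`. -/
def TranslationInvariant {n : ℕ} {A : Type*} (q0 : A) (M : H n A q0 →L[ℂ] H n A q0) : Prop :=
  ∀ (z : Lat n) (v : H n A q0), tau q0 z (M ((tau q0 z).symm v)) = M v


section Local

variable {n : ℕ} {A : Type*} [Fintype A]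

/-- The configuration agreeing with `f` on `D` and with `c` outside `D`. -/
def override {q0 : A} (D : Finset (Lat n)) (f : {x // x ∈ D} → A) (c : Conf n A q0) :
    Conf n A q0 :=
  ⟨fun x => if h : x ∈ D then f ⟨x, h⟩ else c.1 x, by
    refine Set.Finite.subset (Set.Finite.union D.finite_toSet c.2) ?_
    intro x hx
    rcases Decidable.em (x ∈ D) with h | h
    · exact Set.mem_union_left _ h
    · exact Set.mem_union_right _ (by simpa [h] using hx)⟩

/-- A bounded operator on the Hilbert space of finite configurations is local upon the finite
set `D` of cells if its action on basis vectors only modifies, and only reads, the cells in `D`. -/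
def IsLocalUpon (q0 : A) (D : Finset (Lat n)) (T : H n A q0 →L[ℂ] H n A q0) : Prop :=
  ∃ a : ({x // x ∈ D} → A) → ({x // x ∈ D} → A) → ℂ, ∀ c : Conf n A q0,
    T (eVec c) = ∑ f : {x // x ∈ D} → A,
      a f (fun x => c.1 x.1) • eVec (override D f c)

/-- The neighborhood of the cell `x`: `𝒩_x = {x + k : k ∈ 𝒩}`. -/
def nbhd {n : ℕ} (𝒩 : Finset (Lat n)) (x : Lat n) : Finset (Lat n) :=
  𝒩.image (fun k => x + k)

/-- The reflected neighborhood of the cell `x`: `𝒱_x = {x - k : k ∈ 𝒩}`. -/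
def rnbhd {n : ℕ} (𝒩 : Finset (Lat n)) (x : Lat n) : Finset (Lat n) :=
  𝒩.image (fun k => x - k)

/-- A unitary `M` is causal relative to the neighborhood `𝒩` if conjugation `M† A M` maps
operators local upon a cell `x` to operators local upon `𝒩_x`. -/
def Causal (q0 : A) (𝒩 : Finset (Lat n)) (M : H n A q0 →L[ℂ] H n A q0) : Prop :=
  ∀ (x : Lat n) (B : H n A q0 →L[ℂ] H n A q0), IsLocalUpon q0 {x} B →
    IsLocalUpon q0 (nbhd 𝒩 x) (ContinuousLinearMap.adjoint M ∘L B ∘L M)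

end Local

/-- The standard basis vector of the one-cell Hilbert space `ℂ^A`. -/
def wVec (A : Type*) [Fintype A] (a : A) : EuclideanSpace ℂ A :=
  letI : DecidableEq A := Classical.decEq A
  EuclideanSpace.single a 1

/-- The configuration obtained from `c` by replacing the value at the cell `x` by `r`. -/
def updateConf {n : ℕ} {A : Type*} {q0 : A} (x : Lat n) (r : A) (c : Conf n A q0) :
    Conf n A q0 :=
  ⟨Function.update c.1 x r, by
    refine Set.Finite.subset (c.2.union (Set.finite_singleton x)) ?_
    intro y hy
    rcases eq_or_ne y x with rfl | hxy
    · exact Set.mem_union_right _ rfl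
    · exact Set.mem_union_left _ (by
        simpa [Function.update_of_ne hxy] using hy)⟩

/-- The subalgebra `𝔇_{y,x}` of `End(ℂ^A)`: endomorphisms `a` of the one-cell Hilbert space
such that the operator `ι_x(a)` local upon `{x}` implementing `a` at the cell `x` is of the form
`R† B R` for some operator `B` local upon `{x - y}`. -/
def Dset {n : ℕ} {A : Type*} [Fintype A] (q0 : A)
    (R : H n A q0 →L[ℂ] H n A q0) (y x : Lat n) :
    Set (Module.End ℂ (EuclideanSpace ℂ A)) :=
  {a | ∃ B : H n A q0 →L[ℂ] H n A q0, IsLocalUpon q0 {x - y} B ∧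
    ∀ c : Conf n A q0,
      (ContinuousLinearMap.adjoint R ∘L B ∘L R) (eVec c) =
        ∑ q : A, (inner ℂ (wVec A q) (a (wVec A (c.1 x))) : ℂ) • eVec (updateConf x q c)}



section Component

variable {n : ℕ} {𝒩 : Finset (Lat n)} {K : {z // z ∈ 𝒩} → Type*}

/-- The propagation map on configurations in component form:
`(s c) x z = (c (x + z)) z`. -/
def sConf (qz : ∀ z : {z // z ∈ 𝒩}, K z) (c : Conf n (∀ z : {z // z ∈ 𝒩}, K z) qz) :
    Conf n (∀ z : {z // z ∈ 𝒩}, K z) qz :=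
  ⟨fun x z => c.1 (x + z.1) z, by
    refine Set.Finite.subset
      (Set.finite_iUnion (fun z : {z // z ∈ 𝒩} =>
        (c.2.preimage ((add_left_injective z.1).injOn)))) ?_
    intro x hx
    obtain ⟨z, hz⟩ := Function.ne_iff.mp hx
    exact Set.mem_iUnion.2 ⟨z, fun h => hz (congrFun h z)⟩⟩

end Component

/-- The support of a finite configuration, as a `Finset`. -/
def suppF {n : ℕ} {A : Type*} {q0 : A} (c : Conf n A q0) : Finset (Lat n) :=
  c.2.toFinset

/-- The property characterizing the local isomorphism `S̃ : H → Ĥ` induced by a one-cell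
unitary `S : W → Ŵ`. -/
def StildeProp {n : ℕ} {A B : Type*} [Fintype A] [Fintype B] (q0 : A) (qh : B)
    (Slin : EuclideanSpace ℂ A ≃ₗᵢ[ℂ] EuclideanSpace ℂ B)
    (St : H n A q0 ≃ₗᵢ[ℂ] H n B qh) : Prop :=
  ∀ c : Conf n A q0,
    St (eVec c) = ∑ g : {x // x ∈ suppF c} → B,
      (∏ x : {x // x ∈ suppF c}, (inner ℂ (wVec B (g x)) (Slin (wVec A (c.1 x.1))) : ℂ)) •
        eVec (override (suppF c) g (c0 n B qh))

/-- An endomorphism of the one-cell Hilbert space `ℂ^P`, `P = Π_{z ∈ 𝒩} K z`, acting only on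
the `y`-th coordinate. -/
def ActsOnCoord {n : ℕ} {𝒩 : Finset (Lat n)} {K : {z // z ∈ 𝒩} → Type*}
    [∀ z, Fintype (K z)] (y : {z // z ∈ 𝒩})
    (Aop : Module.End ℂ (EuclideanSpace ℂ (∀ z : {z // z ∈ 𝒩}, K z))) : Prop :=
  ∃ f : K y → K y → ℂ, ∀ p p' : ∀ z : {z // z ∈ 𝒩}, K z,
    ((∀ z : {z // z ∈ 𝒩}, z ≠ y → p z = p' z) →
      (inner ℂ (wVec _ p) (Aop (wVec _ p')) : ℂ) = f (p y) (p' y)) ∧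
    (¬ (∀ z : {z // z ∈ 𝒩}, z ≠ y → p z = p' z) →
      (inner ℂ (wVec _ p) (Aop (wVec _ p')) : ℂ) = 0)

/-- A factorization of the module `W` as a tensor product `⨂_{k} V k` carrying the sets of
endomorphisms `Dsets k` onto the endomorphisms acting on the `k`-th tensor factor alone. -/
structure PiTensorFactorization (ι : Type) [Fintype ι] [DecidableEq ι]
    (W : Type*) [AddCommGroup W] [Module ℂ W]
    (Dsets : ι → Set (Module.End ℂ W)) : Type _ where
  /-- The tensor factors. -/
  V : ι → Type
  [grp : ∀ k, AddCommGroup (V k)]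
  [mod : ∀ k, Module ℂ (V k)]
  fin : ∀ k, FiniteDimensional ℂ (V k)
  /-- The linear isomorphism with the tensor product. -/
  S : W ≃ₗ[ℂ] PiTensorProduct ℂ V
  cond : ∀ y : ι,
    (fun a : Module.End ℂ W => S.conj a) '' (Dsets y) =
      Set.range (fun f : Module.End ℂ (V y) =>
        (PiTensorProduct.map
          (Function.update (fun k => (LinearMap.id : V k →ₗ[ℂ] V k)) y f) :
            Module.End ℂ (PiTensorProduct ℂ V)))

/-- The continuous linear map underlying a linear isometry equivalence. -/
def isomCLM {E F : Type*} [NormedAddCommGroup E] [NormedAddCommGroup F]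
    [NormedSpace ℂ E] [NormedSpace ℂ F] (e : E ≃ₗᵢ[ℂ] F) : E →L[ℂ] F :=
  e.toLinearIsometry.toContinuousLinearMap


section Aux
set_option linter.unusedSectionVars false

variable {n : ℕ} {Q : Type} [Fintype Q] {q₀ : Q}

/-- Restriction of a configuration to a finite window. -/
def res (D : Finset (Lat n)) (c : Conf n Q q₀) : {x // x ∈ D} → Q := fun x => c.1 x.1

lemma override_apply_mem {D : Finset (Lat n)} {f : {x // x ∈ D} → Q} {c : Conf n Q q₀}
    {x : Lat n} (h : x ∈ D) : (override D f c).1 x = f ⟨x, h⟩ := by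
  simp only [override, dif_pos h]

lemma override_apply_not_mem {D : Finset (Lat n)} {f : {x // x ∈ D} → Q} {c : Conf n Q q₀}
    {x : Lat n} (h : x ∉ D) : (override D f c).1 x = c.1 x := by
  simp only [override, dif_neg h]

lemma res_override {D : Finset (Lat n)} (f : {x // x ∈ D} → Q) (c : Conf n Q q₀) :
    res D (override D f c) = f := by
  funext x
  show (override D f c).1 x.1 = f x
  rw [override_apply_mem x.2]

lemma override_override {D : Finset (Lat n)} (f g : {x // x ∈ D} → Q) (c : Conf n Q q₀) :
    override D f (override D g c) = override D f c := by
  apply Subtype.ext; funext x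
  by_cases h : x ∈ D
  · rw [override_apply_mem h, override_apply_mem h]
  · rw [override_apply_not_mem h, override_apply_not_mem h, override_apply_not_mem h]

lemma override_of_res {D : Finset (Lat n)} {g : {x // x ∈ D} → Q} {c : Conf n Q q₀}
    (h : res D c = g) : override D g c = c := by
  apply Subtype.ext; funext x
  by_cases hx : x ∈ D
  · rw [override_apply_mem hx, ← h]; rfl
  · rw [override_apply_not_mem hx]

open Classical in
lemma eVec_apply (c c' : Conf n Q q₀) :
    (eVec c : ∀ _ : Conf n Q q₀, ℂ) c' = if c' = c then 1 else 0 := by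
  by_cases h : c' = c
  · subst h; rw [if_pos rfl]; exact lp.single_apply_self 2 c' 1
  · rw [if_neg h]; exact lp.single_apply_ne 2 c 1 h

end Aux
section Aux2
set_option linter.unusedSectionVars false

variable {n : ℕ} {Q : Type} [Fintype Q] {q₀ : Q}

open Classical in
/-- Pointwise cut-off of a vector to configurations whose restriction to `D` is `g`. -/
def projFun (D : Finset (Lat n)) (g : {x // x ∈ D} → Q) (v : H n Q q₀) :
    Conf n Q q₀ → ℂ :=
  fun c => if res D c = g then v c else 0

lemma norm_projFun_le (D : Finset (Lat n)) (g : {x // x ∈ D} → Q) (v : H n Q q₀)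
    (c : Conf n Q q₀) : ‖projFun D g v c‖ ≤ ‖v c‖ := by
  unfold projFun; split
  · exact le_rfl
  · simpa using norm_nonneg _

lemma memℓp_projFun (D : Finset (Lat n)) (g : {x // x ∈ D} → Q) (v : H n Q q₀) :
    Memℓp (projFun D g v) 2 := by
  have hp : (0:ℝ) < (2 : ℝ≥0∞).toReal := by norm_num
  refine memℓp_gen ?_
  have hv := (lp.memℓp v).summable hp
  refine Summable.of_nonneg_of_le (fun c => ?_) (fun c => ?_) hv
  · positivity
  · exact Real.rpow_le_rpow (norm_nonneg _) (norm_projFun_le D g v c) hp.le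

/-- The cut-off as a linear map. -/
def projLM (D : Finset (Lat n)) (g : {x // x ∈ D} → Q) :
    H n Q q₀ →ₗ[ℂ] H n Q q₀ where
  toFun v := ⟨projFun D g v, memℓp_projFun D g v⟩
  map_add' v w := by
    apply lp.ext; funext c
    show projFun D g (v + w) c = projFun D g v c + projFun D g w c
    unfold projFun
    rw [lp.coeFn_add, Pi.add_apply]
    split <;> simp
  map_smul' r v := by
    apply lp.ext; funext c
    show projFun D g (r • v) c = r * projFun D g v c
    unfold projFun
    rw [lp.coeFn_smul, Pi.smul_apply]
    split <;> simp

lemma norm_projLM_apply_le (D : Finset (Lat n)) (g : {x // x ∈ D} → Q) (v : H n Q q₀) :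
    ‖projLM D g v‖ ≤ ‖v‖ := by
  have hp : (0:ℝ) < (2 : ℝ≥0∞).toReal := by norm_num
  rw [lp.norm_eq_tsum_rpow hp, lp.norm_eq_tsum_rpow hp]
  have h1 : ∀ c : Conf n Q q₀, ‖(projLM D g v : ∀ _ : Conf n Q q₀, ℂ) c‖ ^ (2 : ℝ≥0∞).toReal
      ≤ ‖v c‖ ^ (2 : ℝ≥0∞).toReal := fun c =>
    Real.rpow_le_rpow (norm_nonneg _) (norm_projFun_le D g v c) hp.le
  refine Real.rpow_le_rpow (tsum_nonneg fun c => by positivity) ?_ (by norm_num)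
  exact Summable.tsum_le_tsum h1 ((memℓp_projFun D g v).summable hp) ((lp.memℓp v).summable hp)

/-- The cut-off as a continuous linear map. -/
def projCLM (D : Finset (Lat n)) (g : {x // x ∈ D} → Q) :
    H n Q q₀ →L[ℂ] H n Q q₀ :=
  LinearMap.mkContinuous (projLM D g) 1 (fun v => by
    simpa using norm_projLM_apply_le D g v)

open Classical in
lemma projCLM_apply (D : Finset (Lat n)) (g : {x // x ∈ D} → Q) (v : H n Q q₀)
    (c : Conf n Q q₀) :
    (projCLM D g v : ∀ _ : Conf n Q q₀, ℂ) c = if res D c = g then v c else 0 := rfl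

open Classical in
/-- The swap of the patterns `f` and `g` on `D`, as a map on configurations. -/
def swapFun (D : Finset (Lat n)) (f g : {x // x ∈ D} → Q) (c : Conf n Q q₀) :
    Conf n Q q₀ :=
  if res D c = g then override D f c
  else if res D c = f then override D g c else c

lemma swapFun_involutive {D : Finset (Lat n)} {f g : {x // x ∈ D} → Q} (hfg : f ≠ g) :
    Function.Involutive (swapFun (q₀ := q₀) D f g) := by
  intro c
  unfold swapFun
  by_cases hg : res D c = g
  · rw [if_pos hg, if_neg (by rw [res_override]; exact hfg),
      if_pos (res_override f c), override_override, override_of_res hg]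
  · rw [if_neg hg]
    by_cases hf : res D c = f
    · rw [if_pos hf, if_pos (res_override g c), override_override, override_of_res hf]
    · rw [if_neg hf, if_neg hg, if_neg hf]

open Classical in
/-- The swap of the patterns `f` and `g` on `D`, as a permutation of configurations. -/
def swapPerm (D : Finset (Lat n)) (f g : {x // x ∈ D} → Q) :
    Equiv.Perm (Conf n Q q₀) :=
  if h : f = g then Equiv.refl _ else (swapFun_involutive h).toPerm

/-- The matrix-unit operator `E^D_{f,g}`. -/
def matrixUnit (D : Finset (Lat n)) (f g : {x // x ∈ D} → Q) :
    H n Q q₀ →L[ℂ] H n Q q₀ :=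
  isomCLM (lpCongr (swapPerm (q₀ := q₀) D f g)) ∘L projCLM D g

open Classical in
lemma matrixUnit_apply (D : Finset (Lat n)) (f g : {x // x ∈ D} → Q) (v : H n Q q₀)
    (c' : Conf n Q q₀) :
    (matrixUnit D f g v : ∀ _ : Conf n Q q₀, ℂ) c'
      = if res D c' = f then v (override D g c') else 0 := by
  have hcoord : (matrixUnit D f g v : ∀ _ : Conf n Q q₀, ℂ) c'
      = (projCLM D g v : ∀ _ : Conf n Q q₀, ℂ) ((swapPerm (q₀ := q₀) D f g).symm c') := rfl
  rw [hcoord, projCLM_apply]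
  by_cases hfg : f = g
  · subst hfg
    rw [show (swapPerm (q₀ := q₀) D f f).symm c' = c' from by
      rw [swapPerm, dif_pos rfl]; rfl]
    by_cases h : res D c' = f
    · rw [if_pos h, if_pos h, override_of_res h]
    · rw [if_neg h, if_neg h]
  · have hsymm : (swapPerm (q₀ := q₀) D f g).symm c' = swapFun D f g c' := by
      rw [swapPerm, dif_neg hfg]; rfl
    rw [hsymm]
    by_cases hf : res D c' = f
    · have hsw : swapFun (q₀ := q₀) D f g c' = override D g c' := by
        unfold swapFun
        rw [if_neg (by rw [hf]; exact fun h => hfg h), if_pos hf]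
      rw [hsw, if_pos (res_override g c'), if_pos hf]
    · by_cases hg : res D c' = g
      · have hsw : swapFun (q₀ := q₀) D f g c' = override D f c' := by
          unfold swapFun; rw [if_pos hg]
        rw [hsw, if_neg (by rw [res_override]; exact hfg), if_neg hf]
      · have hsw : swapFun (q₀ := q₀) D f g c' = c' := by
          unfold swapFun; rw [if_neg hg, if_neg hf]
        rw [hsw, if_neg hg, if_neg hf]

end Aux2
section Aux3
set_option linter.unusedSectionVars false

variable {n : ℕ} {Q : Type} [Fintype Q] {q₀ : Q}

open Classical in
lemma matrixUnit_eVec (D : Finset (Lat n)) (f g : {x // x ∈ D} → Q) (c : Conf n Q q₀) :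
    matrixUnit D f g (eVec c)
      = if res D c = g then eVec (override D f c) else 0 := by
  by_cases hg : res D c = g
  · rw [if_pos hg]
    apply lp.ext; funext c'
    rw [matrixUnit_apply, eVec_apply]
    by_cases hf : res D c' = f
    · rw [if_pos hf, eVec_apply]
      refine if_congr ?_ rfl rfl
      constructor
      · rintro h
        have : c' = override D f (override D g c') := by
          rw [override_override, ← hf, override_of_res rfl]
        rw [this, h]
      · rintro rfl
        rw [override_override, override_of_res hg]
    · rw [if_neg hf, eVec_apply, if_neg ?_]
      intro hcc
      exact hf (by rw [hcc, res_override])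
  · rw [if_neg hg]
    apply lp.ext; funext c'
    rw [matrixUnit_apply]
    have h0 : ((0 : H n Q q₀) : ∀ _ : Conf n Q q₀, ℂ) c' = 0 := rfl
    rw [h0]
    by_cases hf : res D c' = f
    · rw [if_pos hf, eVec_apply, if_neg ?_]
      intro h
      exact hg (by rw [← h, res_override])
    · rw [if_neg hf]

lemma isLocalUpon_matrixUnit (D : Finset (Lat n)) (f g : {x // x ∈ D} → Q) :
    IsLocalUpon q₀ D (matrixUnit D f g) := by
  classical
  refine ⟨fun f' g' => if f' = f ∧ g' = g then 1 else 0, fun c => ?_⟩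
  rw [matrixUnit_eVec]
  have hres : (fun x : {x // x ∈ D} => c.1 x.1) = res D c := rfl
  rw [hres]
  by_cases hg : res D c = g
  · rw [if_pos hg]
    rw [Finset.sum_congr rfl (g := fun f' => if f' = f then eVec (override D f' c) else 0)
      (fun f' _ => by by_cases h : f' = f <;> simp [h, hg])]
    simp
  · rw [if_neg hg]
    refine (Finset.sum_eq_zero fun f' _ => ?_).symm
    show (if f' = f ∧ res D c = g then (1:ℂ) else 0) • eVec (override D f' c) = 0
    rw [if_neg (fun h => hg h.2), zero_smul]

lemma clm_ext_eVec {A B : H n Q q₀ →L[ℂ] H n Q q₀}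
    (h : ∀ c, A (eVec c) = B (eVec c)) : A = B := by
  classical
  refine ContinuousLinearMap.ext fun v => ?_
  have hs : HasSum (fun c : Conf n Q q₀ => lp.single 2 c (v c)) v :=
    lp.hasSum_single (by norm_num) v
  have hsingle : ∀ c : Conf n Q q₀, lp.single 2 c ((v : ∀ _ : Conf n Q q₀, ℂ) c)
      = (v : ∀ _ : Conf n Q q₀, ℂ) c • eVec c := by
    intro c
    apply lp.ext; funext c'
    rw [lp.coeFn_smul, Pi.smul_apply, eVec_apply, smul_eq_mul]
    by_cases hcc : c' = c
    · subst hcc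
      rw [if_pos rfl, mul_one]
      exact lp.single_apply_self 2 c' _
    · rw [if_neg hcc, mul_zero]
      exact lp.single_apply_ne 2 c _ hcc
  have hA : HasSum (fun c : Conf n Q q₀ => (v : ∀ _ : Conf n Q q₀, ℂ) c • A (eVec c)) (A v) := by
    have := hs.mapL A
    refine this.congr_fun fun c => ?_
    rw [hsingle c, map_smul]
  have hB : HasSum (fun c : Conf n Q q₀ => (v : ∀ _ : Conf n Q q₀, ℂ) c • A (eVec c)) (B v) := by
    have := hs.mapL B
    refine this.congr_fun fun c => ?_
    rw [hsingle c, map_smul, h c]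
  exact hA.unique hB

end Aux3
section Aux4
set_option linter.unusedSectionVars false
set_option maxHeartbeats 1000000

variable {n : ℕ} {Q : Type} [Fintype Q] {q₀ : Q}

lemma isLocalUpon_mono {D D' : Finset (Lat n)} (hDD' : D ⊆ D')
    {T : H n Q q₀ →L[ℂ] H n Q q₀} (hT : IsLocalUpon q₀ D T) : IsLocalUpon q₀ D' T := by
  classical
  obtain ⟨a, ha⟩ := hT
  refine ⟨fun f' g' => if (∀ x : {x // x ∈ D'}, x.1 ∉ D → f' x = g' x)
      then a (fun x => f' ⟨x.1, hDD' x.2⟩) (fun x => g' ⟨x.1, hDD' x.2⟩) else 0, fun c => ?_⟩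
  rw [ha c]
  -- the embedding of patterns on `D` into patterns on `D'`
  set emb : ({x // x ∈ D} → Q) → ({x // x ∈ D'} → Q) :=
    fun f x => if h : x.1 ∈ D then f ⟨x.1, h⟩ else c.1 x.1 with hemb
  have hembinj : Function.Injective emb := by
    intro f₁ f₂ h
    funext x
    have := congrFun h ⟨x.1, hDD' x.2⟩
    simpa [hemb, dif_pos x.2] using this
  have hcondemb : ∀ f, ∀ x : {x // x ∈ D'}, x.1 ∉ D → emb f x = c.1 x.1 := by
    intro f x hx; simp [hemb, dif_neg hx]
  have hcond : ∀ f' : {x // x ∈ D'} → Q,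
      (∀ x : {x // x ∈ D'}, x.1 ∉ D → f' x = c.1 x.1) → f' = emb (fun x => f' ⟨x.1, hDD' x.2⟩) := by
    intro f' hf'
    funext x
    by_cases hx : x.1 ∈ D
    · simp only [hemb, dif_pos hx]
    · rw [hf' x hx]; exact (hcondemb (fun x => f' ⟨x.1, hDD' x.2⟩) x hx).symm
  have hov : ∀ f, override D' (emb f) c = override D f c := by
    intro f
    apply Subtype.ext; funext x
    by_cases hx : x ∈ D
    · rw [override_apply_mem (hDD' hx), override_apply_mem hx]
      simp [hemb, dif_pos hx]
    · rw [override_apply_not_mem hx]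
      by_cases hx' : x ∈ D'
      · rw [override_apply_mem hx']; simp [hemb, dif_neg hx]
      · rw [override_apply_not_mem hx']
  symm
  rw [Finset.sum_congr rfl (g := fun f' =>
      if (∀ x : {x // x ∈ D'}, x.1 ∉ D → f' x = c.1 x.1)
      then a (fun x => f' ⟨x.1, hDD' x.2⟩) (fun x => c.1 x.1) • eVec (override D' f' c)
      else 0) (fun f' _ => by
    beta_reduce
    by_cases hc : (∀ x : {x // x ∈ D'}, x.1 ∉ D → f' x = c.1 x.1)
    · rw [if_pos hc, if_pos hc]
    · rw [if_neg hc, if_neg hc, zero_smul])]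
  rw [← Finset.sum_filter]
  have himage : Finset.univ.filter
      (fun f' : {x // x ∈ D'} → Q => (∀ x : {x // x ∈ D'}, x.1 ∉ D → f' x = c.1 x.1))
      = Finset.univ.image emb := by
    apply Finset.ext; intro f'
    simp only [Finset.mem_filter, Finset.mem_image, Finset.mem_univ, true_and]
    constructor
    · intro hf'; exact ⟨fun x => f' ⟨x.1, hDD' x.2⟩, (hcond f' hf').symm⟩
    · rintro ⟨f, rfl⟩; exact hcondemb f
  rw [himage, Finset.sum_image (fun f _ g _ h => hembinj h)]
  refine Finset.sum_congr rfl fun f _ => ?_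
  rw [hov f]
  congr 1
  congr 1
  · funext x; simp [hemb, dif_pos x.2]

lemma isLocalUpon_comp {D : Finset (Lat n)} {A B : H n Q q₀ →L[ℂ] H n Q q₀}
    (hA : IsLocalUpon q₀ D A) (hB : IsLocalUpon q₀ D B) :
    IsLocalUpon q₀ D (A ∘L B) := by
  classical
  obtain ⟨a, ha⟩ := hA
  obtain ⟨b, hb⟩ := hB
  refine ⟨fun f h => ∑ g : {x // x ∈ D} → Q, a f g * b g h, fun c => ?_⟩
  rw [ContinuousLinearMap.comp_apply, hb c, map_sum]
  have : ∀ g : {x // x ∈ D} → Q,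
      A (b g (fun x => c.1 x.1) • eVec (override D g c))
        = ∑ f : {x // x ∈ D} → Q,
            (a f g * b g (fun x => c.1 x.1)) • eVec (override D f c) := by
    intro g
    rw [map_smul, ha (override D g c), Finset.smul_sum]
    refine Finset.sum_congr rfl fun f _ => ?_
    rw [smul_smul, mul_comm, override_override,
      show (fun x : {x // x ∈ D} => (override D g c).1 x.1) = g from res_override g c]
  rw [Finset.sum_congr rfl (fun g _ => this g), Finset.sum_comm]
  refine Finset.sum_congr rfl fun f _ => ?_
  rw [Finset.sum_smul]

lemma isLocalUpon_comp_union {D₁ D₂ : Finset (Lat n)} {A B : H n Q q₀ →L[ℂ] H n Q q₀}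
    (hA : IsLocalUpon q₀ D₁ A) (hB : IsLocalUpon q₀ D₂ B) :
    IsLocalUpon q₀ (D₁ ∪ D₂) (A ∘L B) :=
  isLocalUpon_comp (isLocalUpon_mono Finset.subset_union_left hA)
    (isLocalUpon_mono Finset.subset_union_right hB)

lemma isLocalUpon_add {D : Finset (Lat n)} {A B : H n Q q₀ →L[ℂ] H n Q q₀}
    (hA : IsLocalUpon q₀ D A) (hB : IsLocalUpon q₀ D B) :
    IsLocalUpon q₀ D (A + B) := by
  obtain ⟨a, ha⟩ := hA
  obtain ⟨b, hb⟩ := hB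
  refine ⟨fun f g => a f g + b f g, fun c => ?_⟩
  rw [ContinuousLinearMap.add_apply, ha c, hb c, ← Finset.sum_add_distrib]
  refine Finset.sum_congr rfl fun f _ => ?_
  rw [add_smul]

lemma isLocalUpon_smul {D : Finset (Lat n)} {A : H n Q q₀ →L[ℂ] H n Q q₀} (z : ℂ)
    (hA : IsLocalUpon q₀ D A) : IsLocalUpon q₀ D (z • A) := by
  obtain ⟨a, ha⟩ := hA
  refine ⟨fun f g => z * a f g, fun c => ?_⟩
  rw [ContinuousLinearMap.smul_apply, ha c, Finset.smul_sum]
  refine Finset.sum_congr rfl fun f _ => ?_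
  rw [smul_smul]

lemma isLocalUpon_zero (D : Finset (Lat n)) : IsLocalUpon q₀ D (0 : H n Q q₀ →L[ℂ] H n Q q₀) := by
  refine ⟨fun _ _ => 0, fun c => ?_⟩
  rw [ContinuousLinearMap.zero_apply]
  symm
  exact Finset.sum_eq_zero fun f _ => zero_smul _ _

lemma isLocalUpon_one (D : Finset (Lat n)) : IsLocalUpon q₀ D (1 : H n Q q₀ →L[ℂ] H n Q q₀) := by
  classical
  refine ⟨fun f g => if f = g then 1 else 0, fun c => ?_⟩
  rw [Finset.sum_congr rfl (g := fun f => if f = (fun x : {x // x ∈ D} => c.1 x.1)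
      then eVec (override D f c) else 0) (fun f _ => by
    beta_reduce
    by_cases h : f = (fun x : {x // x ∈ D} => c.1 x.1)
    · rw [if_pos h, if_pos h, one_smul]
    · rw [if_neg h, if_neg h, zero_smul])]
  rw [Finset.sum_ite_eq' Finset.univ]
  rw [if_pos (Finset.mem_univ _)]
  show eVec c = eVec (override D (res D c) c)
  rw [override_of_res rfl]

lemma isLocalUpon_sum {ι : Type*} {s : Finset ι} {D : Finset (Lat n)}
    {F : ι → (H n Q q₀ →L[ℂ] H n Q q₀)} (h : ∀ i ∈ s, IsLocalUpon q₀ D (F i)) :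
    IsLocalUpon q₀ D (∑ i ∈ s, F i) := by
  classical
  induction s using Finset.induction_on with
  | empty => simpa using isLocalUpon_zero D
  | insert _ _ hx ih =>
    rw [Finset.sum_insert hx]
    exact isLocalUpon_add (h _ (Finset.mem_insert_self _ _))
      (ih fun i hi => h i (Finset.mem_insert_of_mem hi))

lemma override_comm_of_disjoint {D₁ D₂ : Finset (Lat n)} (hdis : Disjoint D₁ D₂)
    (f : {x // x ∈ D₁} → Q) (g : {x // x ∈ D₂} → Q) (c : Conf n Q q₀) :
    override D₁ f (override D₂ g c) = override D₂ g (override D₁ f c) := by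
  apply Subtype.ext; funext x
  by_cases h1 : x ∈ D₁
  · have h2 : x ∉ D₂ := Finset.disjoint_left.mp hdis h1
    rw [override_apply_mem h1, override_apply_not_mem h2, override_apply_mem h1]
  · rw [override_apply_not_mem h1]
    by_cases h2 : x ∈ D₂
    · rw [override_apply_mem h2, override_apply_mem h2]
    · rw [override_apply_not_mem h2, override_apply_not_mem h2, override_apply_not_mem h1]

lemma res_override_of_disjoint {D₁ D₂ : Finset (Lat n)} (hdis : Disjoint D₁ D₂)
    (g : {x // x ∈ D₂} → Q) (c : Conf n Q q₀) :
    res D₁ (override D₂ g c) = res D₁ c := by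
  funext x
  show (override D₂ g c).1 x.1 = c.1 x.1
  rw [override_apply_not_mem (Finset.disjoint_left.mp hdis x.2)]

lemma commute_of_disjoint {D₁ D₂ : Finset (Lat n)} {A B : H n Q q₀ →L[ℂ] H n Q q₀}
    (hA : IsLocalUpon q₀ D₁ A) (hB : IsLocalUpon q₀ D₂ B) (hdis : Disjoint D₁ D₂) :
    A ∘L B = B ∘L A := by
  obtain ⟨a, ha⟩ := hA
  obtain ⟨b, hb⟩ := hB
  apply clm_ext_eVec
  intro c
  rw [ContinuousLinearMap.comp_apply, ContinuousLinearMap.comp_apply, ha c, hb c,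
    map_sum, map_sum]
  have hL : ∀ g : {x // x ∈ D₂} → Q,
      A (b g (fun x => c.1 x.1) • eVec (override D₂ g c))
        = ∑ f : {x // x ∈ D₁} → Q, (a f (fun x => c.1 x.1) * b g (fun x => c.1 x.1)) •
            eVec (override D₁ f (override D₂ g c)) := by
    intro g
    rw [map_smul, ha (override D₂ g c), Finset.smul_sum]
    refine Finset.sum_congr rfl fun f _ => ?_
    rw [smul_smul, mul_comm,
      show (fun x : {x // x ∈ D₁} => (override D₂ g c).1 x.1)
        = (fun x : {x // x ∈ D₁} => c.1 x.1) from res_override_of_disjoint hdis g c]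
  have hR : ∀ f : {x // x ∈ D₁} → Q,
      B (a f (fun x => c.1 x.1) • eVec (override D₁ f c))
        = ∑ g : {x // x ∈ D₂} → Q, (a f (fun x => c.1 x.1) * b g (fun x => c.1 x.1)) •
            eVec (override D₁ f (override D₂ g c)) := by
    intro f
    rw [map_smul, hb (override D₁ f c), Finset.smul_sum]
    refine Finset.sum_congr rfl fun g _ => ?_
    rw [smul_smul, override_comm_of_disjoint hdis,
      show (fun x : {x // x ∈ D₂} => (override D₁ f c).1 x.1)
        = (fun x : {x // x ∈ D₂} => c.1 x.1) from res_override_of_disjoint hdis.symm f c]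
  rw [Finset.sum_congr rfl fun g _ => hL g, Finset.sum_congr rfl fun f _ => hR f,
    Finset.sum_comm]

end Aux4
section Aux5
set_option linter.unusedSectionVars false
set_option maxHeartbeats 1000000

variable {n : ℕ} {Q : Type} [Fintype Q] {q₀ : Q}

/-- Conjugation by `M`. -/
def conjOp (M A : H n Q q₀ →L[ℂ] H n Q q₀) : H n Q q₀ →L[ℂ] H n Q q₀ :=
  ContinuousLinearMap.adjoint M ∘L A ∘L M

section Unitary

variable {M : H n Q q₀ →L[ℂ] H n Q q₀} (hM : M ∈ unitary (H n Q q₀ →L[ℂ] H n Q q₀))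

include hM

lemma adjoint_comp_self (v : H n Q q₀) : ContinuousLinearMap.adjoint M (M v) = v := by
  have h := (Unitary.mem_iff.mp hM).1
  rw [ContinuousLinearMap.star_eq_adjoint] at h
  have := congrArg (fun (T : H n Q q₀ →L[ℂ] H n Q q₀) => T v) h
  simpa [ContinuousLinearMap.mul_apply] using this

lemma self_comp_adjoint (v : H n Q q₀) : M (ContinuousLinearMap.adjoint M v) = v := by
  have h := (Unitary.mem_iff.mp hM).2
  rw [ContinuousLinearMap.star_eq_adjoint] at h
  have := congrArg (fun (T : H n Q q₀ →L[ℂ] H n Q q₀) => T v) h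
  simpa [ContinuousLinearMap.mul_apply] using this

lemma conjOp_comp (A B : H n Q q₀ →L[ℂ] H n Q q₀) :
    conjOp M (A ∘L B) = conjOp M A ∘L conjOp M B := by
  refine ContinuousLinearMap.ext fun v => ?_
  simp only [conjOp, ContinuousLinearMap.comp_apply]
  rw [self_comp_adjoint hM]

lemma conjOp_injective {A B : H n Q q₀ →L[ℂ] H n Q q₀} (h : conjOp M A = conjOp M B) :
    A = B := by
  refine ContinuousLinearMap.ext fun v => ?_
  have hv : ∀ C : H n Q q₀ →L[ℂ] H n Q q₀,
      M (conjOp M C (ContinuousLinearMap.adjoint M v)) = C v := by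
    intro C
    simp only [conjOp, ContinuousLinearMap.comp_apply]
    rw [self_comp_adjoint hM, self_comp_adjoint hM]
  rw [← hv A, ← hv B, h]

lemma conjOp_one : conjOp M (1 : H n Q q₀ →L[ℂ] H n Q q₀) = 1 := by
  refine ContinuousLinearMap.ext fun v => ?_
  simp only [conjOp, ContinuousLinearMap.comp_apply, ContinuousLinearMap.one_apply]
  rw [adjoint_comp_self hM]

end Unitary

lemma conjOp_sum {M : H n Q q₀ →L[ℂ] H n Q q₀} {ι : Type*} (s : Finset ι)
    (F : ι → (H n Q q₀ →L[ℂ] H n Q q₀)) :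
    conjOp M (∑ i ∈ s, F i) = ∑ i ∈ s, conjOp M (F i) := by
  refine ContinuousLinearMap.ext fun v => ?_
  simp only [conjOp, ContinuousLinearMap.comp_apply, ContinuousLinearMap.sum_apply, map_sum]

lemma conjOp_smul {M A : H n Q q₀ →L[ℂ] H n Q q₀} (z : ℂ) :
    conjOp M (z • A) = z • conjOp M A := by
  refine ContinuousLinearMap.ext fun v => ?_
  simp only [conjOp, ContinuousLinearMap.comp_apply, ContinuousLinearMap.smul_apply, map_smul]

lemma matrixUnit_insert {x : Lat n} {D₀ : Finset (Lat n)} (hx : x ∉ D₀)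
    (f g : {z // z ∈ insert x D₀} → Q) :
    matrixUnit (q₀ := q₀) (insert x D₀) f g =
      matrixUnit {x} (fun _ => f ⟨x, Finset.mem_insert_self x D₀⟩)
          (fun _ => g ⟨x, Finset.mem_insert_self x D₀⟩) ∘L
        matrixUnit D₀ (fun z => f ⟨z.1, Finset.mem_insert_of_mem z.2⟩)
          (fun z => g ⟨z.1, Finset.mem_insert_of_mem z.2⟩) := by
  classical
  apply clm_ext_eVec
  intro c
  rw [ContinuousLinearMap.comp_apply, matrixUnit_eVec, matrixUnit_eVec]
  by_cases h₀ : res D₀ c = (fun z : {z // z ∈ D₀} => g ⟨z.1, Finset.mem_insert_of_mem z.2⟩)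
  · rw [if_pos h₀, matrixUnit_eVec]
    by_cases hx1 : c.1 x = g ⟨x, Finset.mem_insert_self x D₀⟩
    · have hres1 : res {x} (override D₀
          (fun z : {z // z ∈ D₀} => f ⟨z.1, Finset.mem_insert_of_mem z.2⟩) c)
          = (fun _ : {z // z ∈ ({x} : Finset (Lat n))} =>
              g ⟨x, Finset.mem_insert_self x D₀⟩) := by
        funext z
        have hz : z.1 = x := Finset.mem_singleton.mp z.2
        show (override D₀ _ c).1 z.1 = _
        rw [hz, override_apply_not_mem hx, hx1]
      have hresins : res (insert x D₀) c = g := by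
        funext z
        rcases Finset.mem_insert.mp z.2 with h | h
        · show c.1 z.1 = g z
          have : z = ⟨x, Finset.mem_insert_self x D₀⟩ := Subtype.ext h
          rw [this]; exact hx1
        · have : z = ⟨z.1, Finset.mem_insert_of_mem h⟩ := Subtype.ext rfl
          rw [this]
          exact congrFun h₀ ⟨z.1, h⟩
      rw [if_pos hres1, if_pos hresins]
      congr 1
      apply Subtype.ext; funext y
      by_cases hy : y = x
      · subst hy
        rw [override_apply_mem (Finset.mem_singleton_self y),
          override_apply_mem (Finset.mem_insert_self y D₀)]
      · rw [override_apply_not_mem (fun h => hy (Finset.mem_singleton.mp h))]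
        by_cases hyD : y ∈ D₀
        · rw [override_apply_mem hyD, override_apply_mem (Finset.mem_insert_of_mem hyD)]
        · rw [override_apply_not_mem hyD,
            override_apply_not_mem (fun h => (Finset.mem_insert.mp h).elim hy hyD)]
    · have hres1 : ¬ (res {x} (override D₀
          (fun z : {z // z ∈ D₀} => f ⟨z.1, Finset.mem_insert_of_mem z.2⟩) c)
          = (fun _ : {z // z ∈ ({x} : Finset (Lat n))} =>
              g ⟨x, Finset.mem_insert_self x D₀⟩)) := by
        intro h
        have := congrFun h ⟨x, Finset.mem_singleton_self x⟩
        rw [show (res {x} (override D₀ _ c)) ⟨x, Finset.mem_singleton_self x⟩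
            = (override D₀ (fun z : {z // z ∈ D₀} =>
              f ⟨z.1, Finset.mem_insert_of_mem z.2⟩) c).1 x from rfl,
          override_apply_not_mem hx] at this
        exact hx1 this
      have hresins : ¬ (res (insert x D₀) c = g) := by
        intro h
        exact hx1 (congrFun h ⟨x, Finset.mem_insert_self x D₀⟩)
      rw [if_neg hres1, if_neg hresins]
  · have hresins : ¬ (res (insert x D₀) c = g) := by
      intro h
      apply h₀
      funext z
      exact congrFun h ⟨z.1, Finset.mem_insert_of_mem z.2⟩
    rw [if_neg h₀, if_neg hresins, map_zero]

lemma conj_matrixUnit_local {𝒩 : Finset (Lat n)} {M : H n Q q₀ →L[ℂ] H n Q q₀}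
    (hM : M ∈ unitary (H n Q q₀ →L[ℂ] H n Q q₀)) (hC : Causal q₀ 𝒩 M)
    (D : Finset (Lat n)) :
    ∀ (f g : {x // x ∈ D} → Q),
      IsLocalUpon q₀ (D.biUnion (nbhd 𝒩)) (conjOp M (matrixUnit D f g)) := by
  classical
  induction D using Finset.induction_on with
  | empty =>
    intro f g
    have h1 : matrixUnit (q₀ := q₀) (∅ : Finset (Lat n)) f g = 1 := by
      apply clm_ext_eVec
      intro c
      rw [matrixUnit_eVec, ContinuousLinearMap.one_apply]
      rw [if_pos (by funext z; exact absurd z.2 (Finset.notMem_empty z.1))]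
      have hov : override (∅ : Finset (Lat n)) f c = c := by
        apply Subtype.ext; funext y
        rw [override_apply_not_mem (Finset.notMem_empty y)]
      rw [hov]
    rw [h1, conjOp_one hM]
    exact isLocalUpon_one _
  | @insert x D₀ hx ih =>
    intro f g
    rw [matrixUnit_insert hx f g, conjOp_comp hM, Finset.biUnion_insert]
    exact isLocalUpon_comp_union
      (hC x _ (isLocalUpon_matrixUnit {x} _ _))
      (ih _ _)

lemma conj_local_of_local {𝒩 : Finset (Lat n)} {M T : H n Q q₀ →L[ℂ] H n Q q₀}
    (hM : M ∈ unitary (H n Q q₀ →L[ℂ] H n Q q₀)) (hC : Causal q₀ 𝒩 M)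
    {D : Finset (Lat n)} (hT : IsLocalUpon q₀ D T) :
    IsLocalUpon q₀ (D.biUnion (nbhd 𝒩)) (conjOp M T) := by
  classical
  obtain ⟨a, ha⟩ := hT
  have hdecomp : T = ∑ f : {x // x ∈ D} → Q, ∑ g : {x // x ∈ D} → Q,
      a f g • matrixUnit D f g := by
    apply clm_ext_eVec
    intro c
    rw [ha c, ContinuousLinearMap.sum_apply]
    refine Finset.sum_congr rfl fun f _ => ?_
    rw [ContinuousLinearMap.sum_apply]
    rw [Finset.sum_congr rfl (g := fun g => if (fun x : {x // x ∈ D} => c.1 x.1) = g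
        then a f g • eVec (override D f c) else 0) (fun g _ => by
      rw [ContinuousLinearMap.smul_apply, matrixUnit_eVec]
      beta_reduce
      by_cases h : res D c = g
      · rw [if_pos h, if_pos (show (fun x : {x // x ∈ D} => c.1 x.1) = g from h)]
      · rw [if_neg h, smul_zero,
          if_neg (show ¬(fun x : {x // x ∈ D} => c.1 x.1) = g from h)])]
    rw [Finset.sum_ite_eq Finset.univ, if_pos (Finset.mem_univ _)]
  rw [hdecomp, conjOp_sum]
  refine isLocalUpon_sum fun f _ => ?_
  rw [conjOp_sum]
  refine isLocalUpon_sum fun g _ => ?_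
  rw [conjOp_smul]
  exact isLocalUpon_smul _ (conj_matrixUnit_local hM hC D f g)

end Aux5
section Aux6
set_option linter.unusedSectionVars false
set_option maxHeartbeats 1000000

variable {n : ℕ} {Q : Type} [Fintype Q] {q₀ : Q}

/-- Update of a single cell, as a singleton override. -/
def ov1 (y : Lat n) (r : Q) (c : Conf n Q q₀) : Conf n Q q₀ :=
  override {y} (fun _ => r) c

lemma ov1_apply_self (y : Lat n) (r : Q) (c : Conf n Q q₀) : (ov1 y r c).1 y = r :=
  override_apply_mem (Finset.mem_singleton_self y)

lemma ov1_apply_ne {z y : Lat n} (h : z ≠ y) (r : Q) (c : Conf n Q q₀) :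
    (ov1 y r c).1 z = c.1 z :=
  override_apply_not_mem (fun hm => h (Finset.mem_singleton.mp hm))

lemma ov1_self (y : Lat n) (c : Conf n Q q₀) : ov1 y (c.1 y) c = c := by
  apply Subtype.ext; funext z
  by_cases h : z = y
  · subst h; exact ov1_apply_self z _ c
  · exact ov1_apply_ne h _ c

lemma ov1_ov1 (y : Lat n) (r s : Q) (c : Conf n Q q₀) : ov1 y r (ov1 y s c) = ov1 y r c :=
  override_override _ _ _

lemma ov1_override_comm {y : Lat n} {D : Finset (Lat n)} (hy : y ∉ D) (r : Q)
    (f : {x // x ∈ D} → Q) (c : Conf n Q q₀) :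
    ov1 y r (override D f c) = override D f (ov1 y r c) :=
  override_comm_of_disjoint (Finset.disjoint_singleton_left.mpr hy) _ _ _

open Classical in
lemma matrixUnit_single_eVec (y : Lat n) (a b : Q) (c : Conf n Q q₀) :
    matrixUnit {y} (fun _ => a) (fun _ => b) (eVec c)
      = if c.1 y = b then eVec (ov1 y a c) else 0 := by
  rw [matrixUnit_eVec]
  refine if_congr ?_ rfl rfl
  constructor
  · intro h; exact congrFun h ⟨y, Finset.mem_singleton_self y⟩
  · intro h; funext z
    show c.1 z.1 = b
    rw [Finset.mem_singleton.mp z.2]; exact h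

lemma isLocalUpon_of_commutes (D : Finset (Lat n)) (B : H n Q q₀ →L[ℂ] H n Q q₀)
    (hcomm : ∀ y ∉ D, ∀ a b : Q,
      B ∘L matrixUnit {y} (fun _ => a) (fun _ => b)
        = matrixUnit {y} (fun _ => a) (fun _ => b) ∘L B) :
    IsLocalUpon q₀ D B := by
  classical
  set β : Conf n Q q₀ → Conf n Q q₀ → ℂ :=
    fun c' c => (B (eVec c) : ∀ _ : Conf n Q q₀, ℂ) c' with hβ
  have hres1 : ∀ (y : Lat n) (r : Q) (d : Conf n Q q₀),
      res {y} d = (fun _ : {z // z ∈ ({y} : Finset (Lat n))} => r) ↔ d.1 y = r := by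
    intro y r d
    constructor
    · intro h1; exact congrFun h1 ⟨y, Finset.mem_singleton_self y⟩
    · intro h1; funext z
      show d.1 z.1 = r
      rw [Finset.mem_singleton.mp z.2]; exact h1
  have R : ∀ y ∉ D, ∀ (a b : Q) (c c' : Conf n Q q₀),
      (if c.1 y = b then β c' (ov1 y a c) else 0)
        = (if c'.1 y = a then β (ov1 y b c') c else 0) := by
    intro y hy a b c c'
    have h := congrArg
      (fun (T : H n Q q₀ →L[ℂ] H n Q q₀) => (T (eVec c) : ∀ _ : Conf n Q q₀, ℂ) c')
      (hcomm y hy a b)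
    simp only [ContinuousLinearMap.comp_apply] at h
    rw [matrixUnit_single_eVec, matrixUnit_apply] at h
    by_cases hb : c.1 y = b
    · rw [if_pos hb] at h
      rw [if_pos hb]
      by_cases ha : c'.1 y = a
      · rw [if_pos ((hres1 y a c').mpr ha)] at h
        rw [if_pos ha]
        exact h
      · rw [if_neg (fun hcon => ha ((hres1 y a c').mp hcon))] at h
        rw [if_neg ha]
        exact h
    · rw [if_neg hb, map_zero] at h
      rw [if_neg hb]
      by_cases ha : c'.1 y = a
      · rw [if_pos ((hres1 y a c').mpr ha)] at h
        rw [if_pos ha]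
        exact h
      · rw [if_neg ha]
  have claim1 : ∀ (c c' : Conf n Q q₀) (y : Lat n), y ∉ D → c'.1 y ≠ c.1 y → β c' c = 0 := by
    intro c c' y hy hne
    have h := R y hy (c.1 y) (c.1 y) c c'
    rw [if_pos rfl, ov1_self, if_neg hne] at h
    exact h
  have claim2 : ∀ (c : Conf n Q q₀) (f : {x // x ∈ D} → Q), ∀ y ∉ D, ∀ r : Q,
      β (override D f (ov1 y r c)) (ov1 y r c) = β (override D f c) c := by
    intro c f y hy r
    have h := R y hy r (c.1 y) c (ov1 y r (override D f c))
    rw [if_pos rfl, if_pos (ov1_apply_self y r (override D f c)), ov1_ov1] at h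
    have hfix : ov1 y (c.1 y) (override D f c) = override D f c := by
      have h1 : (override D f c).1 y = c.1 y := override_apply_not_mem hy
      rw [← h1, ov1_self]
    rw [hfix, ov1_override_comm hy] at h
    exact h
  have claim3 : ∀ (S : Finset (Lat n)) (c₁ c₂ : Conf n Q q₀),
      (∀ x ∈ S, x ∉ D) → (∀ x, x ∉ S → c₁.1 x = c₂.1 x) →
      ∀ f : {x // x ∈ D} → Q, β (override D f c₁) c₁ = β (override D f c₂) c₂ := by
    intro S
    induction S using Finset.induction_on with
    | empty =>
      intro c₁ c₂ _ hagree f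
      have hc : c₁ = c₂ := Subtype.ext (funext fun x => hagree x (Finset.notMem_empty x))
      rw [hc]
    | @insert y S hyS ih =>
      intro c₁ c₂ hD hagree f
      have hyD : y ∉ D := hD y (Finset.mem_insert_self y S)
      rw [← claim2 c₁ f y hyD (c₂.1 y)]
      refine ih (ov1 y (c₂.1 y) c₁) c₂ (fun x hx => hD x (Finset.mem_insert_of_mem hx)) ?_ f
      intro x hx
      by_cases hxy : x = y
      · subst hxy; exact ov1_apply_self x _ c₁
      · rw [ov1_apply_ne hxy]
        exact hagree x (fun hmem => (Finset.mem_insert.mp hmem).elim hxy hx)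
  refine ⟨fun f g =>
    β (override D f (override D g (c0 n Q q₀))) (override D g (c0 n Q q₀)), fun c => ?_⟩
  apply lp.ext; funext c'
  have hcoordsum : ((∑ f : {x // x ∈ D} → Q,
      (fun f g => β (override D f (override D g (c0 n Q q₀))) (override D g (c0 n Q q₀)))
        f (fun x : {x // x ∈ D} => c.1 x.1) • eVec (override D f c) : H n Q q₀)
        : ∀ _ : Conf n Q q₀, ℂ) c'
      = ∑ f : {x // x ∈ D} → Q,
          β (override D f (override D (fun x : {x // x ∈ D} => c.1 x.1) (c0 n Q q₀)))
            (override D (fun x : {x // x ∈ D} => c.1 x.1) (c0 n Q q₀))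
            * (if c' = override D f c then 1 else 0) := by
    rw [lp.coeFn_sum, Finset.sum_apply]
    refine Finset.sum_congr rfl fun f _ => ?_
    rw [lp.coeFn_smul, Pi.smul_apply, eVec_apply, smul_eq_mul]
  rw [hcoordsum]
  by_cases hout : ∀ x, x ∉ D → c'.1 x = c.1 x
  · have hc' : c' = override D (fun x : {x // x ∈ D} => c'.1 x.1) c := by
      apply Subtype.ext; funext x
      by_cases hx : x ∈ D
      · rw [override_apply_mem hx]
      · rw [override_apply_not_mem hx]; exact hout x hx
    rw [Finset.sum_eq_single (fun x : {x // x ∈ D} => c'.1 x.1)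
      (fun f _ hne => by
        rw [if_neg (fun hcon => hne (by
          rw [hcon]
          exact (res_override f c).symm)), mul_zero]
      )
      (fun hmem => absurd (Finset.mem_univ _) hmem)]
    rw [if_pos hc', mul_one]
    have hL : β c' c = β (override D (fun x : {x // x ∈ D} => c'.1 x.1) c) c := by rw [← hc']
    rw [show ((B (eVec c) : ∀ _ : Conf n Q q₀, ℂ) c')
      = β (override D (fun x : {x // x ∈ D} => c'.1 x.1) c) c from hL]
    refine claim3 (suppF c \ D) c
      (override D (fun x : {x // x ∈ D} => c.1 x.1) (c0 n Q q₀))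
      (fun x hx => (Finset.mem_sdiff.mp hx).2) (fun x hx => ?_) _
    by_cases hxD : x ∈ D
    · rw [override_apply_mem hxD]
    · rw [override_apply_not_mem hxD]
      have hxsupp : x ∉ suppF c := fun hs => hx (Finset.mem_sdiff.mpr ⟨hs, hxD⟩)
      have : c.1 x = q₀ := by
        by_contra hne
        exact hxsupp ((Set.Finite.mem_toFinset c.2).mpr hne)
      rw [this]
      rfl
  · push_neg at hout
    obtain ⟨y, hyD, hyne⟩ := hout
    have h0 : (B (eVec c) : ∀ _ : Conf n Q q₀, ℂ) c' = 0 := claim1 c c' y hyD hyne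
    rw [h0]
    symm
    refine Finset.sum_eq_zero fun f _ => ?_
    rw [if_neg (fun hcon => hyne (by
      rw [hcon]; exact override_apply_not_mem hyD)), mul_zero]

end Aux6
/-- For a causal unitary `M`, an operator is local (upon some finite subset)
if and only if its conjugate `M† T M` is local (upon some finite subset). -/
theorem local_algebra_invariant_under_conjugation
    (n : ℕ) (hn : 1 ≤ n) (Q : Type) [Fintype Q] (q₀ : Q) (𝒩 : Finset (Lat n))
    (M : H n Q q₀ →L[ℂ] H n Q q₀) (hM : M ∈ unitary (H n Q q₀ →L[ℂ] H n Q q₀))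
    (hC : Causal q₀ 𝒩 M) (T : H n Q q₀ →L[ℂ] H n Q q₀) :
    (∃ D : Finset (Lat n), IsLocalUpon q₀ D T) ↔
      (∃ D : Finset (Lat n), IsLocalUpon q₀ D (ContinuousLinearMap.adjoint M ∘L T ∘L M)) := by
  constructor
  · rintro ⟨D, hT⟩
    exact ⟨D.biUnion (nbhd 𝒩), conj_local_of_local hM hC hT⟩
  · rintro ⟨D₀, hT'⟩
    refine ⟨D₀.biUnion (rnbhd 𝒩), ?_⟩
    apply isLocalUpon_of_commutes
    intro y hy a b
    apply conjOp_injective hM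
    rw [conjOp_comp hM, conjOp_comp hM]
    have hU : IsLocalUpon q₀ (nbhd 𝒩 y)
        (conjOp M (matrixUnit {y} (fun _ => a) (fun _ => b))) :=
      hC y _ (isLocalUpon_matrixUnit {y} _ _)
    have hT'' : IsLocalUpon q₀ D₀ (conjOp M T) := hT'
    have hdis : Disjoint D₀ (nbhd 𝒩 y) := by
      rw [Finset.disjoint_right]
      intro z hz hzD₀
      obtain ⟨k, hk, rfl⟩ := Finset.mem_image.mp hz
      apply hy
      refine Finset.mem_biUnion.mpr ⟨y + k, hzD₀, ?_⟩
      refine Finset.mem_image.mpr ⟨k, hk, ?_⟩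
      abel
    exact commute_of_disjoint hT'' hU hdis

end QCA
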